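/- arXiv:1907.07896 — 5 statements merged into one kernel-verified Lean document; each statement's English description precedes it below -/
import Mathlib

section
/- Let n ≥ 1, k > 0, c > 0, and β₁,…,βₙ > 0 with ∑βᵢ = 1. The function F(x) = -∑_{i=1}^n βᵢ·xᵢ/(kβᵢ + xᵢ) attains its minimum over the set { x ∈ (ℝ≥0)^{n+1} : xᵢ ≤ βᵢ·x₀ for all i ∈ [n], and ∑_{i=0}^n xᵢ = c } at the point x̂ = (c/2, β₁c/2, …, βₙc/2). -/
open Finset

theorem stmt2 (n : ℕ) (hn : 1 ≤ n) (k c : ℝ) (hk : 0 < k) (hc : 0 < c)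
    (β : Fin n → ℝ) (hβ : ∀ i, 0 < β i) (hsum : ∑ i, β i = 1)
    (F : (Fin (n + 1) → ℝ) → ℝ)
    (hF : F = fun x => -∑ i, β i * x i.succ / (k * β i + x i.succ))
    (xhat : Fin (n + 1) → ℝ)
    (hxhat : xhat = fun j => if h : j = 0 then c / 2 else β (j.pred h) * c / 2) :
    ∀ x : Fin (n + 1) → ℝ, (∀ j, 0 ≤ x j) → (∀ i : Fin n, x i.succ ≤ β i * x 0) →
      (∑ j, x j = c) → F xhat ≤ F x := by
  subst hF hxhat
  intro x hx0 hcap hsumx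
  set p := c / 2 with hp
  have hp0 : 0 < p := by positivity
  have hkp : 0 < k + p := by linarith
  -- sum of xhat terms equals p/(k+p)
  have hxhatsum : (∑ i : Fin n, β i *
      ((fun j : Fin (n+1) => if h : j = 0 then c / 2 else β (j.pred h) * c / 2) i.succ) /
      (k * β i + (fun j : Fin (n+1) => if h : j = 0 then c / 2 else β (j.pred h) * c / 2) i.succ))
      = p / (k + p) := by
    have : ∀ i : Fin n, β i *
        ((fun j : Fin (n+1) => if h : j = 0 then c / 2 else β (j.pred h) * c / 2) i.succ) /
        (k * β i + (fun j : Fin (n+1) => if h : j = 0 then c / 2 else β (j.pred h) * c / 2) i.succ)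
        = β i * (p / (k + p)) := by
      intro i
      have hb := hβ i
      simp only [Fin.succ_ne_zero, dite_false, Fin.pred_succ]
      rw [show β i * c / 2 = β i * p by rw [hp]; ring]
      have hd : k * β i + β i * p ≠ 0 := by positivity
      field_simp
    rw [Finset.sum_congr rfl (fun i _ => this i), ← Finset.sum_mul, hsum, one_mul]
  simp only [← hp] at hxhatsum
  simp only [neg_le_neg_iff, hxhatsum]
  -- total of the tail
  have hT : ∑ i : Fin n, x i.succ = c - x 0 := by
    rw [Fin.sum_univ_succ] at hsumx; linarith
  have hTle : ∑ i : Fin n, x i.succ ≤ x 0 := by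
    calc ∑ i : Fin n, x i.succ ≤ ∑ i : Fin n, β i * x 0 :=
          Finset.sum_le_sum (fun i _ => hcap i)
      _ = x 0 := by rw [← Finset.sum_mul, hsum, one_mul]
  have hTp : ∑ i : Fin n, x i.succ ≤ p := by rw [hT]; rw [hT] at hTle; linarith
  -- tangent line bound
  have key : ∀ i : Fin n, β i * x i.succ / (k * β i + x i.succ)
      ≤ β i * p / (k + p) + k * (x i.succ - β i * p) / (k + p) ^ 2 := by
    intro i
    have hb := hβ i
    have ht := hx0 i.succ
    have hden : 0 < k * β i + x i.succ := by positivity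
    have hrhs : β i * p / (k + p) + k * (x i.succ - β i * p) / (k + p) ^ 2
        = (β i * p * (k + p) + k * (x i.succ - β i * p)) / (k + p) ^ 2 := by
      field_simp
    rw [hrhs, div_le_div_iff₀ hden (by positivity)]
    nlinarith [mul_nonneg hk.le (sq_nonneg (x i.succ - β i * p))]
  calc ∑ i : Fin n, β i * x i.succ / (k * β i + x i.succ)
      ≤ ∑ i : Fin n, (β i * p / (k + p) + k * (x i.succ - β i * p) / (k + p) ^ 2) :=
        Finset.sum_le_sum (fun i _ => key i)
    _ = p / (k + p) + k * ((∑ i : Fin n, x i.succ) - p) / (k + p) ^ 2 := by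
        rw [Finset.sum_add_distrib]
        congr 1
        · rw [← Finset.sum_div, ← Finset.sum_mul, hsum, one_mul]
        · rw [← Finset.sum_div, ← Finset.mul_sum, Finset.sum_sub_distrib,
            ← Finset.sum_mul, hsum, one_mul]
    _ ≤ p / (k + p) := by
        have : k * ((∑ i : Fin n, x i.succ) - p) / (k + p) ^ 2 ≤ 0 := by
          apply div_nonpos_of_nonpos_of_nonneg
          · nlinarith
          · positivity
        linarith
end

section
/- Define seff_i(s) = min(βᵢ·s₀, sᵢ) for a partition s = (s₀,…,sₙ). Suppose s is a feasible partition (all sᵢ ≥ 0, ∑ sᵢ = c) with sᵢ > βᵢ·s₀ for some i. Let a be an index maximizing sₐ/βₐ among indices with sᵢ > βᵢs₀, and define s⁺ by s⁺ₐ = (βₐ/(βₐ+1))(s₀ + sₐ), s⁺₀ = (1/(βₐ+1))(s₀ + sₐ), and s⁺ⱼ = sⱼ otherwise. Then s⁺ is feasible (nonnegative, sums to c), seff_j(s⁺) ≥ seff_j(s) for all j ∈ [n], and seff_a(s⁺) > seff_a(s). -/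
open Finset

theorem stmt5 (n : ℕ) (hn : 1 ≤ n) (c : ℝ) (hc : 0 < c)
    (β : Fin n → ℝ) (hβ : ∀ i, 0 < β i) (hsum : ∑ i, β i = 1)
    (s : Fin (n + 1) → ℝ) (hs0 : ∀ j, 0 ≤ s j) (hsc : ∑ j, s j = c)
    (a : Fin n) (ha : β a * s 0 < s a.succ)
    (hamax : ∀ i : Fin n, β i * s 0 < s i.succ → s i.succ / β i ≤ s a.succ / β a)
    (splus : Fin (n + 1) → ℝ)
    (hsplus : splus = fun j => if j = a.succ then β a / (β a + 1) * (s 0 + s a.succ)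
      else if j = 0 then 1 / (β a + 1) * (s 0 + s a.succ) else s j) :
    (∀ j, 0 ≤ splus j) ∧ (∑ j, splus j = c) ∧
    (∀ i : Fin n, min (β i * s 0) (s i.succ) ≤ min (β i * splus 0) (splus i.succ)) ∧
    min (β a * s 0) (s a.succ) < min (β a * splus 0) (splus a.succ) := by
  have hb : 0 < β a := hβ a
  have hb1 : 0 < β a + 1 := by linarith
  have hne : a.succ ≠ (0 : Fin (n + 1)) := Fin.succ_ne_zero a
  have hsp0 : splus 0 = 1 / (β a + 1) * (s 0 + s a.succ) := by
    rw [hsplus]; simp [hne.symm]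
  have hspa : splus a.succ = β a / (β a + 1) * (s 0 + s a.succ) := by
    rw [hsplus]; simp
  have hs00 : 0 ≤ s 0 := hs0 0
  have hsa0 : 0 ≤ s a.succ := hs0 a.succ
  have hsp0pos : s 0 < splus 0 := by
    rw [hsp0, div_mul_eq_mul_div, lt_div_iff₀ hb1]
    nlinarith
  have hnonneg : ∀ j, 0 ≤ splus j := by
    intro j
    rw [hsplus]
    dsimp only
    split_ifs with h1 h2
    · positivity
    · positivity
    · exact hs0 j
  refine ⟨hnonneg, ?_, ?_, ?_⟩
  · have key : ∑ j, (splus j - s j) = (splus 0 - s 0) + (splus a.succ - s a.succ) := by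
      refine Finset.sum_eq_add_of_mem 0 a.succ (mem_univ _) (mem_univ _) hne.symm ?_
      intro k _ hk
      rw [hsplus]
      dsimp only
      rw [if_neg (by tauto), if_neg (by tauto)]
      ring
    have : ∑ j, (splus j - s j) = 0 := by
      rw [key, hsp0, hspa]
      field_simp
      ring
    have := Finset.sum_sub_distrib (f := splus) (g := s) (s := univ)
    have hsum2 : ∑ j, splus j = ∑ j, s j := by
      have h3 : ∑ j, splus j - ∑ j, s j = 0 := by
        rw [← Finset.sum_sub_distrib]; assumption
      linarith
    rw [hsum2, hsc]
  · intro i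
    rcases eq_or_ne i a with rfl | hia
    · have heq : β i * splus 0 = splus i.succ := by
        rw [hsp0, hspa]; ring
      rw [heq, min_self]
      calc min (β i * s 0) (s i.succ) ≤ β i * s 0 := min_le_left _ _
        _ ≤ β i * splus 0 := by nlinarith
        _ = splus i.succ := heq
    · have hsucc : splus i.succ = s i.succ := by
        rw [hsplus]
        simp [Fin.succ_ne_zero i, (Fin.succ_injective n).ne hia]
      rw [hsucc]
      exact min_le_min (by nlinarith [hβ i]) le_rfl
  · have heq : β a * splus 0 = splus a.succ := by
      rw [hsp0, hspa]; ring
    rw [heq, min_self, min_eq_left ha.le, ← heq]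
    nlinarith
end

section
/- Let B ∈ (ℝ⁺)ⁿ with ∑Bᵢ = c, set βᵢ = Bᵢ/∑ⱼBⱼ, and define U(s) = r·ω·∑_{i=1}^n Bᵢ·min(sᵢ, βᵢs₀)/(Bᵢ + min(sᵢ, βᵢs₀)) for positive constants r, ω. Then over all partitions s ∈ (ℝ≥0)^{n+1} with ∑_{i=0}^n sᵢ = c, U is maximized at s* = (c/2, β₁c/2, …, βₙc/2). -/
open Finset

theorem stmt7 (n : ℕ) (hn : 1 ≤ n) (B : Fin n → ℝ) (hB : ∀ i, 0 < B i)
    (c : ℝ) (hc : c = ∑ i, B i) (r ω : ℝ) (hr : 0 < r) (hω : 0 < ω)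
    (β : Fin n → ℝ) (hβ : β = fun i => B i / ∑ j, B j)
    (U : (Fin (n + 1) → ℝ) → ℝ)
    (hU : U = fun s => r * ω * ∑ i,
      B i * min (s i.succ) (β i * s 0) / (B i + min (s i.succ) (β i * s 0)))
    (sstar : Fin (n + 1) → ℝ)
    (hsstar : sstar = fun j => if h : j = 0 then c / 2 else β (j.pred h) * c / 2) :
    ∀ s : Fin (n + 1) → ℝ, (∀ j, 0 ≤ s j) → ∑ j, s j = c → U s ≤ U sstar := by
  haveI : NeZero n := ⟨by omega⟩
  have hc0 : 0 < c := hc ▸ Finset.sum_pos (fun i _ => hB i) Finset.univ_nonempty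
  have hβi : ∀ i, β i = B i / c := by intro i; rw [hβ, hc]
  have hβpos : ∀ i, 0 < β i := fun i => by rw [hβi]; exact div_pos (hB i) hc0
  have hsum_β : ∑ i, β i = 1 := by
    simp only [hβi]
    rw [← Finset.sum_div, ← hc, div_self hc0.ne']
  have hUstar : U sstar = r * ω * (c / 3) := by
    simp only [hU]
    have hterm : ∀ i : Fin n,
        B i * min (sstar i.succ) (β i * sstar 0) /
          (B i + min (sstar i.succ) (β i * sstar 0)) = B i / 3 := by
      intro i
      have h0 : sstar 0 = c / 2 := by rw [hsstar]; simp
      have h1 : sstar i.succ = β i * c / 2 := by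
        rw [hsstar]; simp [Fin.succ_ne_zero]
      rw [h0, h1]
      have hmin : min (β i * c / 2) (β i * (c / 2)) = B i / 2 := by
        rw [show β i * c / 2 = β i * (c / 2) by ring, min_self, hβi]
        field_simp
      rw [hmin]
      have hBi := hB i
      rw [div_eq_div_iff (by linarith) (by norm_num : (3:ℝ) ≠ 0)]
      ring
    rw [Finset.sum_congr rfl (fun i _ => hterm i), ← Finset.sum_div, ← hc]
  intro s hs hsum
  rw [hUstar]; simp only [hU]
  set m : Fin n → ℝ := fun i => min (s i.succ) (β i * s 0) with hm
  have hm0 : ∀ i, 0 ≤ m i :=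
    fun i => le_min (hs _) (mul_nonneg (hβpos i).le (hs 0))
  have hkey : ∀ i, B i * m i / (B i + m i) ≤ B i / 9 + 4 * m i / 9 := by
    intro i
    have hBi := hB i
    have hden : 0 < B i + m i := by linarith [hm0 i]
    rw [div_le_iff₀ hden]
    nlinarith [sq_nonneg (B i - 2 * m i)]
  have hsplit : c = s 0 + ∑ i : Fin n, s i.succ := by
    rw [← hsum]; exact Fin.sum_univ_succ s
  have hsum_m1 : ∑ i, m i ≤ c - s 0 := by
    have h : ∑ i : Fin n, m i ≤ ∑ i : Fin n, s i.succ :=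
      Finset.sum_le_sum (fun i _ => min_le_left _ _)
    linarith
  have hsum_m2 : ∑ i, m i ≤ s 0 := by
    calc ∑ i, m i ≤ ∑ i, β i * s 0 :=
          Finset.sum_le_sum (fun i _ => min_le_right _ _)
      _ = s 0 := by rw [← Finset.sum_mul, hsum_β, one_mul]
  have hsum_m : ∑ i, m i ≤ c / 2 := by
    rcases le_total (s 0) (c / 2) with h | h
    · linarith
    · linarith
  have hmain : ∑ i, B i * m i / (B i + m i) ≤ c / 3 := by
    calc ∑ i, B i * m i / (B i + m i)
        ≤ ∑ i, (B i / 9 + 4 * m i / 9) :=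
          Finset.sum_le_sum (fun i _ => hkey i)
      _ = c / 9 + (4 / 9) * ∑ i, m i := by
          rw [Finset.sum_add_distrib, ← Finset.sum_div, ← hc, Finset.mul_sum]
          congr 1
          exact Finset.sum_congr rfl (fun i _ => by ring)
      _ ≤ c / 9 + (4 / 9) * (c / 2) := by linarith
      _ = c / 3 := by ring
  have hrω : 0 ≤ r * ω := by positivity
  exact mul_le_mul_of_nonneg_left hmain hrω
end

section
/- The optimal partition s* = (c/2, (c/2)β) scales linearly in c: for any c > 0 and B with ∑Bᵢ = c·t for some normalization, (1/c)·argmax over 𝒟_c^{n+1} of U(s,B) equals (1/2, β/2) where β = B/‖B‖; i.e., the optimal fraction allocated to each component is independent of the total resource c. -/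
open Finset

theorem stmt8 (n : ℕ) (hn : 1 ≤ n) (B : Fin n → ℝ) (hB : ∀ i, 0 < B i)
    (r ω : ℝ) (hr : 0 < r) (hω : 0 < ω)
    (β : Fin n → ℝ) (hβ : β = fun i => B i / ∑ j, B j)
    (U : (Fin (n + 1) → ℝ) → ℝ)
    (hU : U = fun s => r * ω * ∑ i,
      B i * min (s i.succ) (β i * s 0) / (B i + min (s i.succ) (β i * s 0))) :
    ∀ c : ℝ, 0 < c → (∑ i, B i) = c →
      ∀ sstar : Fin (n + 1) → ℝ,
        sstar = (fun j => if h : j = 0 then c / 2 else β (j.pred h) * c / 2) →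
        (∀ s : Fin (n + 1) → ℝ, (∀ j, 0 ≤ s j) → ∑ j, s j = c → U s ≤ U sstar) ∧
        (∀ j : Fin (n + 1),
          sstar j / c = if h : j = 0 then (1 : ℝ) / 2 else β (j.pred h) / 2) := by
  intro c hc hBc sstar hs
  have hc' : c ≠ 0 := ne_of_gt hc
  have hβpos : ∀ i, 0 < β i := by
    intro i
    simp only [hβ]
    rw [hBc]
    exact div_pos (hB i) hc
  have hβsum : ∑ i, β i = 1 := by
    simp only [hβ]
    rw [← Finset.sum_div, hBc, div_self hc']
  have hstar0 : sstar 0 = c / 2 := by rw [hs]; simp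
  have hstars : ∀ i : Fin n, sstar i.succ = β i * c / 2 := by
    intro i
    rw [hs]
    simp [Fin.succ_ne_zero]
  -- value at sstar
  have hterm : ∀ i : Fin n,
      B i * min (sstar i.succ) (β i * sstar 0) /
        (B i + min (sstar i.succ) (β i * sstar 0)) = B i / 3 := by
    intro i
    have hBi : β i * c = B i := by
      simp only [hβ]
      rw [hBc]
      field_simp
    rw [hstar0, hstars, show β i * (c / 2) = β i * c / 2 by ring, min_self, hBi]
    have hb := hB i
    field_simp
    ring
  have hUstar : U sstar = r * ω * (c / 3) := by
    rw [hU]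
    simp only
    rw [Finset.sum_congr rfl (fun i _ => hterm i), ← Finset.sum_div, hBc]
  constructor
  · intro s hsnn hsum
    have hsum' : s 0 + ∑ i, s (Fin.succ i) = c := by
      rw [← hsum, Fin.sum_univ_succ]
    have hm0 : ∀ i : Fin n, 0 ≤ min (s i.succ) (β i * s 0) :=
      fun i => le_min (hsnn _) (mul_nonneg (le_of_lt (hβpos i)) (hsnn 0))
    have key : ∀ i : Fin n,
        B i * min (s i.succ) (β i * s 0) / (B i + min (s i.succ) (β i * s 0)) ≤
          (B i + 4 * min (s i.succ) (β i * s 0)) / 9 := by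
      intro i
      have hBi := hB i
      have hmi := hm0 i
      rw [div_le_div_iff₀ (by linarith) (by norm_num)]
      nlinarith [sq_nonneg (B i - 2 * min (s i.succ) (β i * s 0))]
    have hmle1 : ∑ i, min (s i.succ) (β i * s 0) ≤ s 0 := by
      calc ∑ i, min (s i.succ) (β i * s 0) ≤ ∑ i, β i * s 0 :=
            Finset.sum_le_sum fun i _ => min_le_right _ _
        _ = s 0 := by rw [← Finset.sum_mul, hβsum, one_mul]
    have hmle2 : ∑ i, min (s i.succ) (β i * s 0) ≤ c - s 0 := by
      have h1 : ∑ i, min (s i.succ) (β i * s 0) ≤ ∑ i, s (Fin.succ i) :=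
        Finset.sum_le_sum fun i _ => min_le_left _ _
      linarith
    have hUb : ∑ i, B i * min (s i.succ) (β i * s 0) /
        (B i + min (s i.succ) (β i * s 0)) ≤ c / 3 := by
      calc ∑ i, B i * min (s i.succ) (β i * s 0) /
            (B i + min (s i.succ) (β i * s 0))
          ≤ ∑ i, (B i + 4 * min (s i.succ) (β i * s 0)) / 9 :=
            Finset.sum_le_sum fun i _ => key i
        _ = (c + 4 * ∑ i, min (s i.succ) (β i * s 0)) / 9 := by
            rw [← Finset.sum_div, Finset.sum_add_distrib, ← Finset.mul_sum, hBc]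
        _ ≤ c / 3 := by linarith
    have hUs : U s = r * ω * ∑ i, B i * min (s i.succ) (β i * s 0) /
        (B i + min (s i.succ) (β i * s 0)) := by rw [hU]
    rw [hUs, hUstar]
    have hrω : (0 : ℝ) ≤ r * ω := le_of_lt (mul_pos hr hω)
    exact mul_le_mul_of_nonneg_left hUb hrω
  · intro j
    rw [hs]
    by_cases h : j = 0
    · simp only [h, dif_pos]
      field_simp
    · simp only [dif_neg h]
      field_simp
end

section
/- Let X₁,…,X_m be independent random variables with each Xᵢ = Uᵢ^{1/Sᵢ} for Uᵢ uniform on [0,1] and Sᵢ > 0. Then P(Xᵢ is the unique maximum) = Sᵢ / ∑_{k=1}^m S_k. -/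
open MeasureTheory

theorem stmt14 (m : ℕ) (hm : 1 ≤ m) (S : Fin m → ℝ) (hS : ∀ k, 0 < S k) (i : Fin m) :
    (Measure.pi fun _ : Fin m => volume.restrict (Set.Icc (0 : ℝ) 1))
      {ω : Fin m → ℝ | ∀ k, k ≠ i → ω k ^ ((1 : ℝ) / S k) < ω i ^ ((1 : ℝ) / S i)}
      = ENNReal.ofReal (S i / ∑ k, S k) := by
  obtain ⟨n, rfl⟩ : ∃ n, m = n + 1 := ⟨m - 1, (Nat.succ_pred_eq_of_pos hm).symm⟩
  set ν : Measure ℝ := volume.restrict (Set.Icc (0 : ℝ) 1) with hν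
  set B : Set (ℝ × (Fin n → ℝ)) :=
    {p | ∀ j, p.2 j ^ ((1 : ℝ) / S (i.succAbove j)) < p.1 ^ ((1 : ℝ) / S i)} with hB
  have hBm : MeasurableSet B := by
    rw [hB, Set.setOf_forall]
    refine MeasurableSet.iInter fun j => measurableSet_lt ?_ ?_
    · exact (Real.continuous_rpow_const (div_pos one_pos (hS _)).le).measurable.comp
        ((measurable_pi_apply j).comp measurable_snd)
    · exact (Real.continuous_rpow_const (div_pos one_pos (hS _)).le).measurable.comp
        measurable_fst
  have hpre : {ω : Fin (n + 1) → ℝ |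
      ∀ k, k ≠ i → ω k ^ ((1 : ℝ) / S k) < ω i ^ ((1 : ℝ) / S i)}
      = MeasurableEquiv.piFinSuccAbove (fun _ => ℝ) i ⁻¹' B := by
    ext ω
    simp only [Set.mem_setOf_eq, Set.mem_preimage, MeasurableEquiv.piFinSuccAbove_apply,
      Fin.removeNth, hB]
    constructor
    · intro h j; exact h _ (i.succAbove_ne j)
    · intro h k hk
      obtain ⟨j, rfl⟩ := Fin.exists_succAbove_eq hk
      exact h j
  rw [hpre,
    (measurePreserving_piFinSuccAbove (fun _ : Fin (n + 1) => ν) i).measure_preimage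
      hBm.nullMeasurableSet,
    Measure.prod_apply hBm]
  set T : ℝ := ∑ j : Fin n, S (i.succAbove j) with hT
  have hT0 : 0 ≤ T := Finset.sum_nonneg fun j _ => (hS _).le
  set c : ℝ := T / S i with hc
  have hc0 : 0 ≤ c := div_nonneg hT0 (hS i).le
  have key : ∀ u ∈ Set.Ioo (0 : ℝ) 1,
      (Measure.pi fun _ : Fin n => ν) (Prod.mk u ⁻¹' B) = ENNReal.ofReal (u ^ c) := by
    intro u hu
    have hpre2 : Prod.mk u ⁻¹' B
        = Set.pi Set.univ fun j : Fin n =>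
            {t : ℝ | t ^ ((1 : ℝ) / S (i.succAbove j)) < u ^ ((1 : ℝ) / S i)} := by
      ext y; simp [hB, Set.mem_pi]
    rw [hpre2, Measure.pi_pi]
    have hmeas : ∀ j : Fin n,
        ν {t : ℝ | t ^ ((1 : ℝ) / S (i.succAbove j)) < u ^ ((1 : ℝ) / S i)}
          = ENNReal.ofReal (u ^ (S (i.succAbove j) / S i)) := by
      intro j
      set a : ℝ := S (i.succAbove j) with ha
      have ha0 : 0 < a := hS _
      set w : ℝ := u ^ (a / S i) with hw
      have hw0 : 0 < w := Real.rpow_pos_of_pos hu.1 _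
      have hw1 : w ≤ 1 := Real.rpow_le_one hu.1.le hu.2.le (div_pos ha0 (hS i)).le
      have hwa : w ^ ((1 : ℝ) / a) = u ^ ((1 : ℝ) / S i) := by
        rw [hw, ← Real.rpow_mul hu.1.le]
        congr 1
        rw [div_mul_div_comm, mul_one, mul_comm (S i) a, div_mul_eq_div_div,
          div_self ha0.ne']
      have hset : {t : ℝ | t ^ ((1 : ℝ) / a) < u ^ ((1 : ℝ) / S i)} ∩ Set.Icc 0 1
          = Set.Ico 0 w := by
        ext t
        simp only [Set.mem_inter_iff, Set.mem_setOf_eq, Set.mem_Icc, Set.mem_Ico]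
        constructor
        · rintro ⟨hlt, ht0, ht1⟩
          refine ⟨ht0, ?_⟩
          rw [← hwa] at hlt
          exact (Real.rpow_lt_rpow_iff ht0 hw0.le (by positivity)).1 hlt
        · rintro ⟨ht0, htw⟩
          refine ⟨?_, ht0, le_trans htw.le hw1⟩
          rw [← hwa]
          exact Real.rpow_lt_rpow ht0 htw (by positivity)
      have hsm : MeasurableSet {t : ℝ | t ^ ((1 : ℝ) / a) < u ^ ((1 : ℝ) / S i)} :=
        (Real.continuous_rpow_const (by positivity)).measurable measurableSet_Iio
      rw [hν, Measure.restrict_apply hsm, hset, Real.volume_Ico, sub_zero]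
    rw [Finset.prod_congr rfl fun j _ => hmeas j, ← ENNReal.ofReal_prod_of_nonneg
      fun j _ => Real.rpow_nonneg hu.1.le _]
    congr 1
    rw [← Real.rpow_sum_of_pos hu.1, hc, hT, Finset.sum_div]
  have hrw : ∫⁻ u, (Measure.pi fun _ : Fin n => ν) (Prod.mk u ⁻¹' B) ∂ν
      = ∫⁻ u in Set.Ioo (0 : ℝ) 1, ENNReal.ofReal (u ^ c) := by
    rw [hν]
    rw [← setLIntegral_congr (Ioo_ae_eq_Icc (α := ℝ) (μ := volume))]
    exact setLIntegral_congr_fun measurableSet_Ioo (fun u hu => key u hu)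
  rw [hrw]
  have hcont : Continuous fun u : ℝ => u ^ c := Real.continuous_rpow_const hc0
  have hint : IntegrableOn (fun u : ℝ => u ^ c) (Set.Ioo 0 1) volume :=
    (hcont.integrableOn_Icc (a := 0) (b := 1)).mono_set Set.Ioo_subset_Icc_self
  rw [← ofReal_integral_eq_lintegral_ofReal hint
    ((ae_restrict_iff' measurableSet_Ioo).2
      (ae_of_all _ fun u hu => Real.rpow_nonneg hu.1.le _))]
  have hInt : ∫ u in Set.Ioo (0 : ℝ) 1, u ^ c = 1 / (c + 1) := by
    rw [← integral_Ioc_eq_integral_Ioo, ← intervalIntegral.integral_of_le (by norm_num : (0:ℝ) ≤ 1),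
      integral_rpow (Or.inl (by linarith : (-1 : ℝ) < c)), Real.one_rpow,
      Real.zero_rpow (by positivity), sub_zero]
  rw [hInt]
  congr 1
  have hsum : ∑ k, S k = S i + T := Fin.sum_univ_succAbove S i
  rw [hsum, hc]
  have hSi := hS i
  rw [div_add' _ _ _ hSi.ne', one_mul, one_div_div, add_comm T (S i)]
end
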